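/- arXiv:2303.07591 — 2 statements merged into one kernel-verified Lean document; each statement's English description precedes it below -/
import Mathlib

section
/- For a multi-index α with |α| = n, the polynomial P_α(x) = (|x|²/(4(n+1)!)) · Σ_{k=0}^{⌊n/2⌋} ((-1)^k (n-k)!/(k+1)!) (|x|²/4)^k Δ^k(x^α) defined on ℝ² satisfies Δ P_α = x^α, i.e., P_α is a polynomial anti-Laplacian of the monomial x^α. -/
/-- First pure partial derivative in the first variable. -/
noncomputable def pdx (f : ℝ × ℝ → ℝ) (x : ℝ × ℝ) : ℝ := deriv (fun s => f (s, x.2)) x.1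

/-- First pure partial derivative in the second variable. -/
noncomputable def pdy (f : ℝ × ℝ → ℝ) (x : ℝ × ℝ) : ℝ := deriv (fun s => f (x.1, s)) x.2

/-- The Laplacian on `ℝ²`. -/
noncomputable def lap (f : ℝ × ℝ → ℝ) : ℝ × ℝ → ℝ := fun x => pdx (pdx f) x + pdy (pdy f) x

/-- The monomial `x^α = x₁^{α₁} x₂^{α₂}`. -/
noncomputable def mono (α₁ α₂ : ℕ) : ℝ × ℝ → ℝ := fun x => x.1 ^ α₁ * x.2 ^ α₂

set_option linter.unreachableTactic false
set_option linter.unusedTactic false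
set_option linter.unnecessarySeqFocus false

open MvPolynomial Finset

noncomputable section AL
namespace AL

abbrev MP := MvPolynomial (Fin 2) ℝ

/-- degree of a Fin-2 finsupp -/
lemma deg2 (d : Fin 2 →₀ ℕ) : d.degree = d 0 + d 1 := by
  rw [Finsupp.degree_apply]
  rw [Finset.sum_subset (Finset.subset_univ d.support)]
  · simp [Fin.sum_univ_two]
  · intro i _ hi
    simpa using Finsupp.notMem_support_iff.mp hi

lemma euler_monomial (d : Fin 2 →₀ ℕ) (a : ℝ) :
    X 0 * pderiv 0 (monomial d a) + X 1 * pderiv 1 (monomial d a)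
      = (d.degree : ℝ) • monomial d a := by
  rw [deg2]
  have h : ∀ i : Fin 2, X i * pderiv i (monomial d a) = (d i : ℝ) • monomial d a := by
    intro i
    rw [pderiv_monomial]
    rcases Nat.eq_zero_or_pos (d i) with h0 | h0
    · simp [h0]
    · rw [X, monomial_mul, one_mul]
      have : Finsupp.single i 1 + (d - Finsupp.single i 1) = d := by
        ext j
        rcases eq_or_ne j i with rfl | hj
        · simp; omega
        · simp [Finsupp.single_apply, hj.symm, (by simpa [eq_comm] using hj : ¬ i = j)]
      rw [this]
      rw [smul_monomial]
      rw [smul_eq_mul]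
      ring
  rw [h 0, h 1, ← add_smul]
  push_cast
  ring_nf

lemma euler {p : MP} {n : ℕ} (h : p.IsHomogeneous n) :
    X 0 * pderiv 0 p + X 1 * pderiv 1 p = (n : ℝ) • p := by
  conv_lhs => rw [← p.support_sum_monomial_coeff]
  rw [map_sum, map_sum, Finset.mul_sum, Finset.mul_sum, ← Finset.sum_add_distrib]
  conv_rhs => rw [← p.support_sum_monomial_coeff, Finset.smul_sum]
  apply Finset.sum_congr rfl
  intro d hd
  rw [euler_monomial]
  congr 2
  have := h (MvPolynomial.mem_support_iff.mp hd)
  rw [deg2]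
  rw [← this]
  simp [Finsupp.weight_apply, Finsupp.sum]
  rw [show ∑ x ∈ d.support, d x = d.degree from rfl]
  exact (deg2 d).symm


lemma homog_pderiv {p : MP} {n : ℕ} (i : Fin 2) (h : p.IsHomogeneous (n+1)) :
    (pderiv i p).IsHomogeneous n := by
  conv_lhs => rw [← p.support_sum_monomial_coeff]
  rw [map_sum]
  apply IsHomogeneous.sum
  intro d hd
  rw [pderiv_monomial]
  rcases Nat.eq_zero_or_pos (d i) with h0 | h0
  · simp [h0]
    exact isHomogeneous_zero _ _ _
  · apply isHomogeneous_monomial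
    have hdeg : d.degree = n + 1 := by
      have := h (MvPolynomial.mem_support_iff.mp hd)
      rw [← this]
      simp [Finsupp.weight_apply, Finsupp.sum]
      rfl
    rw [deg2] at hdeg
    rw [deg2]
    simp only [Finsupp.tsub_apply, Finsupp.single_apply]
    rcases Fin.exists_fin_two.mp ⟨i, rfl⟩ with h' | h' <;> rw [h'] at h0 ⊢ <;> simp <;> omega

lemma pderiv_homog_zero {p : MP} (i : Fin 2) (h : p.IsHomogeneous 0) :
    pderiv i p = 0 := by
  conv_lhs => rw [← p.support_sum_monomial_coeff]
  rw [map_sum]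
  apply Finset.sum_eq_zero
  intro d hd
  have hdeg : d.degree = 0 := by
    have := h (MvPolynomial.mem_support_iff.mp hd)
    rw [← this]; simp [Finsupp.weight_apply, Finsupp.sum]; rfl
  rw [deg2] at hdeg
  have : d i = 0 := by rcases Fin.exists_fin_two.mp ⟨i, rfl⟩ with h' | h' <;> rw [h'] <;> omega
  rw [pderiv_monomial, this]
  simp

/-- the formal Laplacian -/
def Lp (p : MP) : MP := pderiv 0 (pderiv 0 p) + pderiv 1 (pderiv 1 p)

lemma Lp_homog {p : MP} {n : ℕ} (h : p.IsHomogeneous (n+2)) :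
    (Lp p).IsHomogeneous n :=
  ((homog_pderiv 0 (homog_pderiv 0 h)).add (homog_pderiv 1 (homog_pderiv 1 h)))

lemma Lp_zero_of_low {p : MP} {n : ℕ} (hn : n ≤ 1) (h : p.IsHomogeneous n) :
    Lp p = 0 := by
  interval_cases n
  · simp [Lp, pderiv_homog_zero _ h]
  · simp [Lp, pderiv_homog_zero 0 (homog_pderiv 0 h), pderiv_homog_zero 1 (homog_pderiv 1 h)]

/-- r = |x|² -/
def r : MP := X 0 ^ 2 + X 1 ^ 2

lemma r_homog : r.IsHomogeneous 2 := by
  exact IsHomogeneous.add (by simpa using (isHomogeneous_X ℝ (0:Fin 2)).pow 2)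
    (by simpa using (isHomogeneous_X ℝ (1:Fin 2)).pow 2)

lemma Lp_add (p q : MP) : Lp (p + q) = Lp p + Lp q := by
  simp [Lp]; ring

lemma Lp_C_mul (c : ℝ) (p : MP) : Lp (C c * p) = C c * Lp p := by
  simp [Lp, pderiv_mul]; ring

lemma Lp_r_mul (p : MP) :
    Lp (r * p) = 4 * p + 4 * (X 0 * pderiv 0 p + X 1 * pderiv 1 p) + r * Lp p := by
  rw [show r = X 0 * X 0 + X 1 * X 1 by rw [r]; ring]
  simp [Lp, pderiv_mul, pderiv_X_self,
    pderiv_X_of_ne (show (1:Fin 2) ≠ 0 by decide),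
    pderiv_X_of_ne (show (0:Fin 2) ≠ 1 by decide)]
  ring

lemma Lp_r_pow_mul (k : ℕ) {d : ℕ} (p : MP) (h : p.IsHomogeneous d) :
    Lp (r ^ (k+1) * p)
      = C ((4 * (k+1) * (k+1+d) : ℕ) : ℝ) * (r ^ k * p) + r ^ (k+1) * Lp p := by
  induction k with
  | zero =>
    rw [pow_one, Lp_r_mul, euler h, smul_eq_C_mul]
    push_cast
    simp only [map_add, map_mul, map_pow, map_ofNat, map_natCast, map_one]
    ring
  | succ k ih =>
    have hrp : (r ^ (k+1) * p).IsHomogeneous (2*(k+1) + d) := by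
      exact (r_homog.pow (k+1)).mul h
    calc Lp (r ^ (k+1+1) * p) = Lp (r * (r ^ (k+1) * p)) := by ring_nf
      _ = _ := by
        rw [Lp_r_mul, euler hrp, ih, smul_eq_C_mul]
        push_cast
        simp only [map_add, map_mul, map_pow, map_ofNat, map_natCast, map_one]
        ring


def mp (a1 a2 : ℕ) : MP := X 0 ^ a1 * X 1 ^ a2

lemma mp_homog (a1 a2 : ℕ) : (mp a1 a2).IsHomogeneous (a1 + a2) :=
  by simpa [mp] using ((isHomogeneous_X ℝ (0:Fin 2)).pow a1).mul ((isHomogeneous_X ℝ (1:Fin 2)).pow a2)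

lemma iter_homog (a1 a2 : ℕ) (k : ℕ) (hk : 2*k ≤ a1 + a2) :
    (Lp^[k] (mp a1 a2)).IsHomogeneous (a1 + a2 - 2*k) := by
  induction k with
  | zero => simpa using mp_homog a1 a2
  | succ k ih =>
    rw [Function.iterate_succ_apply']
    have h2 : 2*k ≤ a1+a2 := by omega
    have : a1 + a2 - 2*k = (a1 + a2 - 2*(k+1)) + 2 := by omega
    exact Lp_homog (by rw [← this]; exact ih h2)

noncomputable def bb (n k : ℕ) : ℝ :=
  ((-1:ℝ)^k * (Nat.factorial (n-k)) / (Nat.factorial (k+1))) / (4^(k+1) * Nat.factorial (n+1))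

def ee (n k : ℕ) : ℕ := 4*(k+1)*(n-k+1)

lemma coeff0 (n : ℕ) : bb n 0 * (ee n 0 : ℝ) = 1 := by
  have h1 : (Nat.factorial (n+1) : ℝ) ≠ 0 := Nat.cast_ne_zero.mpr (Nat.factorial_ne_zero _)
  simp only [bb, ee]
  rw [Nat.factorial_succ n]
  field_simp
  simp only [Nat.sub_zero]
  push_cast
  ring

lemma coeff_succ (n k : ℕ) (h : 2*(k+1) ≤ n) :
    bb n (k+1) * (ee n (k+1) : ℝ) + bb n k = 0 := by
  have h1 : (Nat.factorial (n+1) : ℝ) ≠ 0 := Nat.cast_ne_zero.mpr (Nat.factorial_ne_zero _)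
  have h2 : (Nat.factorial (k+1) : ℝ) ≠ 0 := Nat.cast_ne_zero.mpr (Nat.factorial_ne_zero _)
  have h3 : (Nat.factorial (k+2) : ℝ) ≠ 0 := Nat.cast_ne_zero.mpr (Nat.factorial_ne_zero _)
  have e1 : n - k = (n - (k+1)) + 1 := by omega
  have e2 : n - (k+1) + 1 = n - k := by omega
  simp only [bb, ee]
  rw [e2, e1, Nat.factorial_succ (n - (k+1)), show k+1+1 = k+2 from rfl,
    Nat.factorial_succ (k+1)]
  have h4 : (4:ℝ)^(k+1) ≠ 0 := by positivity
  field_simp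
  push_cast
  ring

lemma Lp_sum {ι : Type} (s : Finset ι) (f : ι → MP) :
    Lp (∑ i ∈ s, f i) = ∑ i ∈ s, Lp (f i) := by
  simp [Lp, map_sum, Finset.sum_add_distrib]

theorem main_alg (a1 a2 : ℕ) :
    Lp (∑ k ∈ range ((a1+a2)/2 + 1),
        C (bb (a1+a2) k) * (r^(k+1) * Lp^[k] (mp a1 a2))) = mp a1 a2 := by
  set n := a1 + a2 with hn
  set K := n / 2 with hKdef
  have hg0 : Lp^[K+1] (mp a1 a2) = 0 := by
    rw [Function.iterate_succ_apply']
    exact Lp_zero_of_low (n := n - 2*K) (by omega) (iter_homog a1 a2 K (by omega))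
  have key : ∀ k ∈ range (K+1),
      Lp (C (bb n k) * (r^(k+1) * Lp^[k] (mp a1 a2)))
        = C (bb n k * (ee n k : ℝ)) * (r^k * Lp^[k] (mp a1 a2))
          + C (bb n k) * (r^(k+1) * Lp^[k+1] (mp a1 a2)) := by
    intro k hk
    have h2k : 2*k ≤ n := by
      rw [mem_range] at hk; omega
    have hee : 4*(k+1)*(k+1+(n-2*k)) = ee n k := by
      simp only [ee]; congr 1; omega
    rw [Lp_C_mul, Lp_r_pow_mul k _ (iter_homog a1 a2 k h2k), hee,
      Function.iterate_succ_apply']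
    rw [map_mul]
    ring
  rw [Lp_sum, Finset.sum_congr rfl key, Finset.sum_add_distrib,
    Finset.sum_range_succ', Finset.sum_range_succ]
  rw [hg0]
  have hA0 : C (bb n 0 * (ee n 0 : ℝ)) * (r^0 * Lp^[0] (mp a1 a2)) = mp a1 a2 := by
    rw [coeff0]
    simp
  rw [hA0]
  have hcancel : ∀ k ∈ range K,
      C (bb n (k+1) * (ee n (k+1) : ℝ)) * (r^(k+1) * Lp^[k+1] (mp a1 a2))
        = - (C (bb n k) * (r^(k+1) * Lp^[k+1] (mp a1 a2))) := by
    intro k hk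
    rw [mem_range] at hk
    have h2 : 2*(k+1) ≤ n := by omega
    have := coeff_succ n k h2
    have hb : bb n (k+1) * (ee n (k+1) : ℝ) = - bb n k := by linarith
    rw [hb, map_neg]
    ring
  rw [Finset.sum_congr rfl hcancel]
  simp


/-- evaluation of a 2-variable polynomial as a function on `ℝ × ℝ` -/
def ev (p : MP) (x : ℝ × ℝ) : ℝ := MvPolynomial.eval ![x.1, x.2] p


lemma hasDerivAt_fst (p : MP) (a b : ℝ) :
    HasDerivAt (fun s => MvPolynomial.eval ![s, b] p)
      (MvPolynomial.eval ![a, b] (pderiv 0 p)) a := by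
  induction p using MvPolynomial.induction_on with
  | C c => simpa using (hasDerivAt_const a c)
  | add p q hp hq => simp only [map_add]; exact hp.add hq
  | mul_X p i hp =>
    rcases Fin.exists_fin_two.mp ⟨i, rfl⟩ with h | h <;> subst h
    · have := hp.mul (hasDerivAt_id a)
      simp only [eval_mul, eval_X, pderiv_mul, pderiv_X_self, Pi.mul_def, map_add, map_mul, map_one,
        Matrix.cons_val_zero, id_eq] at this ⊢
      exact this.congr_deriv (by simp)
    · have := hp.mul_const b
      simp only [eval_mul, eval_X, pderiv_mul, pderiv_X_of_ne (show (1:Fin 2) ≠ 0 by decide),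
        map_add, map_mul, map_zero, Matrix.cons_val_one, Matrix.head_cons] at this ⊢
      exact this.congr_deriv (by simp)

lemma hasDerivAt_snd (p : MP) (a b : ℝ) :
    HasDerivAt (fun s => MvPolynomial.eval ![a, s] p)
      (MvPolynomial.eval ![a, b] (pderiv 1 p)) b := by
  induction p using MvPolynomial.induction_on with
  | C c => simpa using (hasDerivAt_const b c)
  | add p q hp hq => simp only [map_add]; exact hp.add hq
  | mul_X p i hp =>
    rcases Fin.exists_fin_two.mp ⟨i, rfl⟩ with h | h <;> subst h
    · have := hp.mul_const a
      simp only [eval_mul, eval_X, pderiv_mul, pderiv_X_of_ne (show (0:Fin 2) ≠ 1 by decide),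
        map_add, map_mul, map_zero, Matrix.cons_val_zero] at this ⊢
      exact this.congr_deriv (by simp)
    · have := hp.mul (hasDerivAt_id b)
      simp only [eval_mul, eval_X, pderiv_mul, pderiv_X_self, Pi.mul_def, map_add, map_mul, map_one,
        Matrix.cons_val_one, Matrix.head_cons, id_eq] at this ⊢
      exact this.congr_deriv (by simp)


lemma pdx_ev (p : MP) : pdx (ev p) = ev (pderiv 0 p) := by
  funext x
  exact (hasDerivAt_fst p x.1 x.2).deriv

lemma pdy_ev (p : MP) : pdy (ev p) = ev (pderiv 1 p) := by
  funext x
  exact (hasDerivAt_snd p x.1 x.2).deriv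

lemma lap_ev (p : MP) : lap (ev p) = ev (Lp p) := by
  funext x
  simp [lap, pdx_ev, pdy_ev, Lp, ev, map_add]

lemma iter_lap_ev (a1 a2 k : ℕ) : lap^[k] (mono a1 a2) = ev (Lp^[k] (mp a1 a2)) := by
  induction k with
  | zero => funext x; simp [mono, mp, ev]
  | succ k ih =>
    rw [Function.iterate_succ_apply', Function.iterate_succ_apply', ih, lap_ev]

end AL
end AL

open AL in
/-- The polynomial
`P_α(x) = (|x|²/(4(n+1)!)) · Σ_{k=0}^{⌊n/2⌋} ((-1)^k (n-k)!/(k+1)!) (|x|²/4)^k Δ^k(x^α)`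
is an anti-Laplacian of the monomial `x^α`, where `n = |α| = α₁ + α₂`. -/
theorem anti_laplacian_of_monomial (α₁ α₂ : ℕ) :
    let n := α₁ + α₂
    let P : ℝ × ℝ → ℝ := fun x =>
      ((x.1 ^ 2 + x.2 ^ 2) / (4 * (Nat.factorial (n + 1) : ℝ))) *
        ∑ k ∈ Finset.range (n / 2 + 1),
          ((-1 : ℝ) ^ k * (Nat.factorial (n - k) : ℝ) / (Nat.factorial (k + 1) : ℝ)) *
            ((x.1 ^ 2 + x.2 ^ 2) / 4) ^ k * (lap^[k] (mono α₁ α₂) x)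
    ∀ x : ℝ × ℝ, lap P x = mono α₁ α₂ x := by
  intro n P x
  have hP : P = ev (∑ k ∈ Finset.range ((α₁+α₂)/2 + 1),
      MvPolynomial.C (bb (α₁+α₂) k) * (r^(k+1) * Lp^[k] (mp α₁ α₂))) := by
    funext y
    show ((y.1 ^ 2 + y.2 ^ 2) / (4 * (Nat.factorial ((α₁+α₂) + 1) : ℝ))) *
        ∑ k ∈ Finset.range ((α₁+α₂) / 2 + 1),
          ((-1 : ℝ) ^ k * (Nat.factorial ((α₁+α₂) - k) : ℝ) / (Nat.factorial (k + 1) : ℝ)) *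
            ((y.1 ^ 2 + y.2 ^ 2) / 4) ^ k * (lap^[k] (mono α₁ α₂) y) = _
    rw [ev, map_sum, Finset.mul_sum]
    apply Finset.sum_congr rfl
    intro k hk
    rw [iter_lap_ev]
    rw [map_mul, map_mul, map_pow, MvPolynomial.eval_C]
    rw [show (MvPolynomial.eval ![y.1, y.2] r) = y.1^2 + y.2^2 by simp [r]]
    rw [ev]
    have h1 : (Nat.factorial ((α₁+α₂)+1) : ℝ) ≠ 0 := Nat.cast_ne_zero.mpr (Nat.factorial_ne_zero _)
    have h2 : (Nat.factorial (k+1) : ℝ) ≠ 0 := Nat.cast_ne_zero.mpr (Nat.factorial_ne_zero _)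
    rw [bb]
    rw [div_pow]
    field_simp
    ring
  rw [hP, lap_ev, main_alg α₁ α₂]
  simp [ev, mp, mono]
end

section
/- If ρ and ρ̂ are differentiable functions on an open subset of ℝ² with ∇ρ = (φ, -φ̂) and ∇ρ̂ = (φ̂, φ) for C¹ functions φ, φ̂, then Φ(x) = (x₁ ρ(x) + x₂ ρ̂(x))/4 satisfies ΔΦ = φ, provided φ and φ̂ satisfy the Cauchy–Riemann equations ∂φ/∂x₁ = ∂φ̂/∂x₂, ∂φ/∂x₂ = -∂φ̂/∂x₁. -/
lemma hasDerivAt_slice_x (f : ℝ × ℝ → ℝ) (x : ℝ × ℝ) (hf : DifferentiableAt ℝ f x) :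
    HasDerivAt (fun s => f (s, x.2)) (pdx f x) x.1 := by
  have h : HasDerivAt (fun s : ℝ => (s, x.2)) ((1 : ℝ), (0 : ℝ)) x.1 :=
    (hasDerivAt_id x.1).prodMk (hasDerivAt_const _ _)
  have h2 : HasDerivAt (fun s => f (s, x.2)) (fderiv ℝ f x ((1 : ℝ), (0 : ℝ))) x.1 := by
    have := hf.hasFDerivAt
    have := (this.comp_hasDerivAt x.1 (by simpa using h))
    exact this
  have := h2.deriv
  rw [pdx, this]
  exact h2

lemma hasDerivAt_slice_y (f : ℝ × ℝ → ℝ) (x : ℝ × ℝ) (hf : DifferentiableAt ℝ f x) :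
    HasDerivAt (fun s => f (x.1, s)) (pdy f x) x.2 := by
  have h : HasDerivAt (fun s : ℝ => (x.1, s)) ((0 : ℝ), (1 : ℝ)) x.2 :=
    (hasDerivAt_const _ _).prodMk (hasDerivAt_id x.2)
  have h2 : HasDerivAt (fun s => f (x.1, s)) (fderiv ℝ f x ((0 : ℝ), (1 : ℝ))) x.2 := by
    have := hf.hasFDerivAt
    have := (this.comp_hasDerivAt x.2 (by simpa using h))
    exact this
  have := h2.deriv
  rw [pdy, this]
  exact h2

/-- If `∇ρ = (φ, -φ̂)` and `∇ρ̂ = (φ̂, φ)` on an open set `U ⊆ ℝ²`, where `φ, φ̂` are `C¹`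
and satisfy the Cauchy–Riemann equations, then `Φ(x) = (x₁ ρ(x) + x₂ ρ̂(x))/4` satisfies
`ΔΦ = φ` on `U`. -/
theorem anti_laplacian_from_conjugates
    (U : Set (ℝ × ℝ)) (hU : IsOpen U)
    (φ φhat ρ ρhat : ℝ × ℝ → ℝ)
    (hφ : ContDiffOn ℝ 1 φ U) (hφhat : ContDiffOn ℝ 1 φhat U)
    (hρ : DifferentiableOn ℝ ρ U) (hρhat : DifferentiableOn ℝ ρhat U)
    (hgradρ : ∀ y ∈ U, pdx ρ y = φ y ∧ pdy ρ y = -φhat y)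
    (hgradρhat : ∀ y ∈ U, pdx ρhat y = φhat y ∧ pdy ρhat y = φ y)
    (hCR : ∀ y ∈ U, pdx φ y = pdy φhat y ∧ pdy φ y = -pdx φhat y) :
    ∀ x ∈ U, lap (fun y => (y.1 * ρ y + y.2 * ρhat y) / 4) x = φ x := by
  intro x hx
  set Φ : ℝ × ℝ → ℝ := fun y => (y.1 * ρ y + y.2 * ρhat y) / 4 with hΦ
  -- differentiability at points of U
  have hρat : ∀ y ∈ U, DifferentiableAt ℝ ρ y := fun y hy =>
    (hρ.differentiableAt (hU.mem_nhds hy))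
  have hρhatat : ∀ y ∈ U, DifferentiableAt ℝ ρhat y := fun y hy =>
    (hρhat.differentiableAt (hU.mem_nhds hy))
  have hφat : DifferentiableAt ℝ φ x :=
    ((hφ.contDiffAt (hU.mem_nhds hx)).differentiableAt one_ne_zero)
  have hφhatat : DifferentiableAt ℝ φhat x :=
    ((hφhat.contDiffAt (hU.mem_nhds hx)).differentiableAt one_ne_zero)
  -- first partials of Φ on U
  have hpdxΦ : ∀ y ∈ U, pdx Φ y = (ρ y + y.1 * φ y + y.2 * φhat y) / 4 := by
    intro y hy
    have h1 : HasDerivAt (fun s => ρ (s, y.2)) (φ y) y.1 := by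
      have := hasDerivAt_slice_x ρ y (hρat y hy)
      rwa [(hgradρ y hy).1] at this
    have h2 : HasDerivAt (fun s => ρhat (s, y.2)) (φhat y) y.1 := by
      have := hasDerivAt_slice_x ρhat y (hρhatat y hy)
      rwa [(hgradρhat y hy).1] at this
    have h3 : HasDerivAt (fun s => (s * ρ (s, y.2) + y.2 * ρhat (s, y.2)) / 4)
        ((1 * ρ (y.1, y.2) + y.1 * φ y + y.2 * φhat y) / 4) y.1 := by
      exact (((hasDerivAt_id y.1).mul h1).add (h2.const_mul y.2)).div_const 4
    have := h3.deriv
    rw [pdx, hΦ]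
    simp only [Prod.mk.eta] at this ⊢
    rw [this]; ring
  have hpdyΦ : ∀ y ∈ U, pdy Φ y = (-(y.1 * φhat y) + ρhat y + y.2 * φ y) / 4 := by
    intro y hy
    have h1 : HasDerivAt (fun s => ρ (y.1, s)) (-φhat y) y.2 := by
      have := hasDerivAt_slice_y ρ y (hρat y hy)
      rwa [(hgradρ y hy).2] at this
    have h2 : HasDerivAt (fun s => ρhat (y.1, s)) (φ y) y.2 := by
      have := hasDerivAt_slice_y ρhat y (hρhatat y hy)
      rwa [(hgradρhat y hy).2] at this
    have h3 : HasDerivAt (fun s => (y.1 * ρ (y.1, s) + s * ρhat (y.1, s)) / 4)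
        ((y.1 * (-φhat y) + (1 * ρhat (y.1, y.2) + y.2 * φ y)) / 4) y.2 := by
      exact ((h1.const_mul y.1).add ((hasDerivAt_id y.2).mul h2)).div_const 4
    have := h3.deriv
    rw [pdy, hΦ]
    simp only [Prod.mk.eta] at this ⊢
    rw [this]; ring
  -- second partial in x
  have hxx : pdx (pdx Φ) x = (2 * φ x + x.1 * pdx φ x + x.2 * pdx φhat x) / 4 := by
    have hev : (fun s => pdx Φ (s, x.2))
        =ᶠ[nhds x.1] (fun s => (ρ (s, x.2) + s * φ (s, x.2) + x.2 * φhat (s, x.2)) / 4) := by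
      have hopen : IsOpen {s : ℝ | (s, x.2) ∈ U} :=
        hU.preimage (continuous_id.prodMk continuous_const)
      filter_upwards [hopen.mem_nhds (by exact hx)] with s hs
      simpa using hpdxΦ (s, x.2) hs
    have h1 : HasDerivAt (fun s => ρ (s, x.2)) (φ x) x.1 := by
      have := hasDerivAt_slice_x ρ x (hρat x hx)
      rwa [(hgradρ x hx).1] at this
    have h2 : HasDerivAt (fun s => φ (s, x.2)) (pdx φ x) x.1 := hasDerivAt_slice_x φ x hφat
    have h3 : HasDerivAt (fun s => φhat (s, x.2)) (pdx φhat x) x.1 :=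
      hasDerivAt_slice_x φhat x hφhatat
    have h4 : HasDerivAt (fun s => (ρ (s, x.2) + s * φ (s, x.2) + x.2 * φhat (s, x.2)) / 4)
        ((φ x + (1 * φ (x.1, x.2) + x.1 * pdx φ x) + x.2 * pdx φhat x) / 4) x.1 :=
      ((h1.add ((hasDerivAt_id x.1).mul h2)).add (h3.const_mul x.2)).div_const 4
    calc pdx (pdx Φ) x = deriv (fun s => (ρ (s, x.2) + s * φ (s, x.2) + x.2 * φhat (s, x.2)) / 4) x.1 :=
          hev.deriv_eq
      _ = _ := by rw [h4.deriv]; simp only [Prod.mk.eta]; ring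
  -- second partial in y
  have hyy : pdy (pdy Φ) x = (2 * φ x - x.1 * pdy φhat x + x.2 * pdy φ x) / 4 := by
    have hev : (fun s => pdy Φ (x.1, s))
        =ᶠ[nhds x.2] (fun s => (-(x.1 * φhat (x.1, s)) + ρhat (x.1, s) + s * φ (x.1, s)) / 4) := by
      have hopen : IsOpen {s : ℝ | ((x.1 : ℝ), s) ∈ U} :=
        hU.preimage (continuous_const.prodMk continuous_id)
      filter_upwards [hopen.mem_nhds (by exact hx)] with s hs
      simpa using hpdyΦ (x.1, s) hs
    have h1 : HasDerivAt (fun s => ρhat (x.1, s)) (φ x) x.2 := by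
      have := hasDerivAt_slice_y ρhat x (hρhatat x hx)
      rwa [(hgradρhat x hx).2] at this
    have h2 : HasDerivAt (fun s => φ (x.1, s)) (pdy φ x) x.2 := hasDerivAt_slice_y φ x hφat
    have h3 : HasDerivAt (fun s => φhat (x.1, s)) (pdy φhat x) x.2 :=
      hasDerivAt_slice_y φhat x hφhatat
    have h4 : HasDerivAt (fun s => (-(x.1 * φhat (x.1, s)) + ρhat (x.1, s) + s * φ (x.1, s)) / 4)
        ((-(x.1 * pdy φhat x) + φ x + (1 * φ (x.1, x.2) + x.2 * pdy φ x)) / 4) x.2 :=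
      ((((h3.const_mul x.1).neg).add h1).add ((hasDerivAt_id x.2).mul h2)).div_const 4
    calc pdy (pdy Φ) x
        = deriv (fun s => (-(x.1 * φhat (x.1, s)) + ρhat (x.1, s) + s * φ (x.1, s)) / 4) x.2 :=
          hev.deriv_eq
      _ = _ := by rw [h4.deriv]; simp only [Prod.mk.eta]; ring
  have hCR1 := (hCR x hx).1
  have hCR2 := (hCR x hx).2
  show pdx (pdx Φ) x + pdy (pdy Φ) x = φ x
  rw [hxx, hyy, hCR1, hCR2]
  ring
end
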